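/- For every n ≥ 3, the square of the path P_n admits a signed product cordial labeling. -/

import Mathlib

/-- Number of vertices with label `s` under labeling `α`. -/
def vCount {V : Type} [Fintype V] [DecidableEq V] (α : V → ℤ) (s : ℤ) : ℕ :=
  (Finset.univ.filter (fun v => α v = s)).card

/-- The induced edge label on an unordered pair. -/
def edgeLabel {V : Type} (α : V → ℤ) : Sym2 V → ℤ :=
  Sym2.lift ⟨fun u v => α u * α v, fun u v => mul_comm _ _⟩

/-- Number of edges of `G` with induced label `s` under vertex labeling `α`. -/
def eCount {V : Type} [Fintype V] [DecidableEq V] (G : SimpleGraph V)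
    [DecidableRel G.Adj] (α : V → ℤ) (s : ℤ) : ℕ :=
  (G.edgeFinset.filter (fun e => edgeLabel α e = s)).card

/-- `G` admits a signed product cordial labeling. -/
def IsSignedProductCordial {V : Type} [Fintype V] [DecidableEq V]
    (G : SimpleGraph V) [DecidableRel G.Adj] : Prop :=
  ∃ α : V → ℤ, (∀ v, α v = 1 ∨ α v = -1) ∧
    ((vCount α 1 : ℤ) - (vCount α (-1) : ℤ)).natAbs ≤ 1 ∧
    ((eCount G α 1 : ℤ) - (eCount G α (-1) : ℤ)).natAbs ≤ 1

/-- The splitting graph of `G`: for each vertex `v` (the `inl` copy) a new vertex `v'`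
(the `inr` copy) adjacent to exactly the neighbors of `v` in `G`. -/
def splt {V : Type} (G : SimpleGraph V) : SimpleGraph (V ⊕ V) where
  Adj x y := match x, y with
    | .inl u, .inl v => G.Adj u v
    | .inl u, .inr v => G.Adj u v
    | .inr u, .inl v => G.Adj u v
    | .inr _, .inr _ => False
  symm := ⟨by rintro (u|u) (v|v) h <;> first | exact G.adj_symm h | exact h.elim⟩
  loopless := ⟨by rintro (u|u) h; exact G.loopless.irrefl u h; exact h⟩

instance {V : Type} (G : SimpleGraph V) [DecidableRel G.Adj] :
    DecidableRel (splt G).Adj := fun x y =>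
  match x, y with
  | .inl u, .inl v => inferInstanceAs (Decidable (G.Adj u v))
  | .inl u, .inr v => inferInstanceAs (Decidable (G.Adj u v))
  | .inr u, .inl v => inferInstanceAs (Decidable (G.Adj u v))
  | .inr _, .inr _ => inferInstanceAs (Decidable False)

/-- The square of the path `Pₙ`: vertices `0,…,n-1` (for `v₁,…,vₙ`), with `i ~ j`
iff their indices differ by `1` or `2`. -/
def pathSq (n : ℕ) : SimpleGraph (Fin n) where
  Adj i j := i.val + 1 = j.val ∨ j.val + 1 = i.val ∨ i.val + 2 = j.val ∨ j.val + 2 = i.val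
  symm := ⟨by intro i j h; tauto⟩
  loopless := ⟨by intro i h; rcases h with h | h | h | h <;> omega⟩

instance (n : ℕ) : DecidableRel (pathSq n).Adj := fun i j =>
  inferInstanceAs (Decidable (_ ∨ _ ∨ _ ∨ _))

/-- The alternating labeling: vertex `vᵢ` (index `i-1`) gets `1` if `i` is odd, `-1`
if `i` is even. -/
def altLabel (n : ℕ) : Fin n → ℤ := fun i => if i.val % 2 = 0 then 1 else -1

lemma finCardFilter (n : ℕ) (p : ℕ → Prop) [DecidablePred p] :
    (Finset.univ.filter (fun i : Fin n => p i.val)).card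
      = ((Finset.range n).filter p).card := by
  rw [Finset.card_filter, Finset.card_filter]
  exact Fin.sum_univ_eq_sum_range (fun i => if p i then 1 else 0) n

lemma evenCount (n : ℕ) : ((Finset.range n).filter (fun i => i % 2 = 0)).card = (n+1)/2 := by
  induction n with
  | zero => simp
  | succ k ih =>
    rw [Finset.range_add_one, Finset.filter_insert]
    split
    · rw [Finset.card_insert_of_notMem (by simp)]; omega
    · omega

lemma oddCount (n : ℕ) : ((Finset.range n).filter (fun i => ¬ i % 2 = 0)).card = n/2 := by
  induction n with
  | zero => simp
  | succ k ih =>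
    rw [Finset.range_add_one, Finset.filter_insert]
    split
    · rw [Finset.card_insert_of_notMem (by simp)]; omega
    · omega

lemma altLabel_one (n : ℕ) (i : Fin n) : altLabel n i = 1 ↔ i.val % 2 = 0 := by
  unfold altLabel; split <;> simp_all

lemma altLabel_negone (n : ℕ) (i : Fin n) : altLabel n i = -1 ↔ ¬ i.val % 2 = 0 := by
  unfold altLabel; split <;> simp_all

lemma edgeLabel_alt (n : ℕ) (a b : Fin n) :
    edgeLabel (altLabel n) s(a, b) = 1 ↔ a.val % 2 = b.val % 2 := by
  simp only [edgeLabel, Sym2.lift_mk, altLabel]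
  split <;> split <;> simp_all <;> omega

lemma edgeLabel_alt' (n : ℕ) (a b : Fin n) :
    edgeLabel (altLabel n) s(a, b) = -1 ↔ ¬ a.val % 2 = b.val % 2 := by
  simp only [edgeLabel, Sym2.lift_mk, altLabel]
  split <;> split <;> simp_all <;> omega

lemma pathSq_adj (n : ℕ) (a b : Fin n) :
    (pathSq n).Adj a b ↔
      (a.val + 1 = b.val ∨ b.val + 1 = a.val ∨ a.val + 2 = b.val ∨ b.val + 2 = a.val) :=
  Iff.rfl

lemma eCount_aux (n : ℕ) (hn : 3 ≤ n) (k : ℕ) (hk : k = 1 ∨ k = 2) (s : ℤ)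
    (hs : ∀ a b : Fin n, edgeLabel (altLabel n) s(a, b) = s ↔ (a.val + b.val) % 2 = k % 2) :
    eCount (pathSq n) (altLabel n) s = n - k := by
  have hnpos : 0 < n := by omega
  unfold eCount
  have himg : (pathSq n).edgeFinset.filter (fun e => edgeLabel (altLabel n) e = s)
      = (Finset.univ.filter (fun i : Fin n => i.val + k < n)).image
          (fun i => s(i, (⟨(i.val + k) % n, Nat.mod_lt _ hnpos⟩ : Fin n))) := by
    ext e
    induction e using Sym2.ind with
    | _ a b =>
      simp only [Finset.mem_filter, SimpleGraph.mem_edgeFinset, SimpleGraph.mem_edgeSet,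
        Finset.mem_image, Finset.mem_univ, true_and, hs]
      constructor
      · rintro ⟨hadj, hpar⟩
        rw [pathSq_adj] at hadj
        have hab : a.val + k = b.val ∨ b.val + k = a.val := by omega
        rcases hab with h | h
        · refine ⟨a, by omega, ?_⟩
          congr 1
          refine Fin.ext ?_
          show (a.val + k) % n = b.val
          rw [Nat.mod_eq_of_lt (by omega)]
          omega
        · refine ⟨b, by omega, ?_⟩
          rw [Sym2.eq_swap]
          congr 1
          refine Fin.ext ?_
          show (b.val + k) % n = a.val
          rw [Nat.mod_eq_of_lt (by omega)]
          omega
      · rintro ⟨i, hi, he⟩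
        have hm : (i.val + k) % n = i.val + k := Nat.mod_eq_of_lt (by omega)
        rw [Sym2.eq_iff] at he
        have hv : (a.val = i.val ∧ b.val = i.val + k) ∨ (b.val = i.val ∧ a.val = i.val + k) := by
          rcases he with ⟨h1, h2⟩ | ⟨h1, h2⟩
          · left
            refine ⟨(congrArg Fin.val h1).symm, ?_⟩
            have := (congrArg Fin.val h2)
            simp [hm] at this
            omega
          · right
            refine ⟨(congrArg Fin.val h1).symm, ?_⟩
            have := (congrArg Fin.val h2)
            simp [hm] at this
            omega
        refine ⟨?_, by omega⟩
        rw [pathSq_adj]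
        rcases hk with rfl | rfl <;> omega
  rw [himg, Finset.card_image_of_injOn, finCardFilter n (fun x => x + k < n)]
  · rw [show (Finset.range n).filter (fun i => i + k < n) = Finset.range (n - k) by
      ext i; simp; omega]
    simp
  · intro i hi j hj hij
    simp only [Finset.mem_coe, Finset.mem_filter, Finset.mem_univ, true_and] at hi hj
    have hmi : (i.val + k) % n = i.val + k := Nat.mod_eq_of_lt (by omega)
    have hmj : (j.val + k) % n = j.val + k := Nat.mod_eq_of_lt (by omega)
    rw [Sym2.eq_iff] at hij
    apply Fin.ext
    rcases hij with ⟨h1, h2⟩ | ⟨h1, h2⟩ <;>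
    · have e1 := congrArg Fin.val h1
      have e2 := congrArg Fin.val h2
      simp [hmi, hmj] at e1 e2
      omega


/-- For every `n ≥ 3`, the square of the path `Pₙ` admits a signed
product cordial labeling. -/
theorem pathSq_signedProductCordial (n : ℕ) (hn : 3 ≤ n) :
    IsSignedProductCordial (pathSq n) := by
  refine ⟨altLabel n, fun v => by unfold altLabel; split <;> simp, ?_, ?_⟩
  · have h1 : vCount (altLabel n) 1 = (n+1)/2 := by
      unfold vCount
      simp only [altLabel_one]
      rw [finCardFilter n (fun x => x % 2 = 0), evenCount]
    have h2 : vCount (altLabel n) (-1) = n/2 := by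
      unfold vCount
      simp only [altLabel_negone]
      rw [finCardFilter n (fun x => ¬ x % 2 = 0), oddCount]
    rw [h1, h2]; omega
  · have h1 : eCount (pathSq n) (altLabel n) 1 = n - 2 := by
      apply eCount_aux n hn 2 (Or.inr rfl)
      intro a b
      rw [edgeLabel_alt]
      omega
    have h2 : eCount (pathSq n) (altLabel n) (-1) = n - 1 := by
      apply eCount_aux n hn 1 (Or.inl rfl)
      intro a b
      rw [edgeLabel_alt']
      constructor <;> intro h <;> omega
    rw [h1, h2]; omega
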